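/- Let X be a set of prime numbers. Define its natural density d(X) = liminf_{N→∞} (1/π(N)) · #{p ∈ X : p ≤ N}, where π(N) is the number of primes ≤ N, and its weighted density δ(X) = liminf_{x→∞} (1/ψ(x)) Σ_{p∈X, p≤x} (log p)/(p-1), where ψ(x) = Σ_{p≤x} (log p)/(p-1). Then δ(X) ≥ d(X). -/

import Mathlib

open Filter

namespace Stmt4Aux

open Topology

noncomputable def fw (n : ℕ) : ℝ := Real.log n / ((n : ℝ) - 1)

lemma fw_nonneg (n : ℕ) : 0 ≤ fw n := by
  unfold fw
  match n with
  | 0 => simp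
  | 1 => simp
  | (m + 2) =>
    have hm : (0 : ℝ) ≤ (m : ℝ) := Nat.cast_nonneg m
    apply div_nonneg
    · apply Real.log_nonneg
      push_cast
      linarith
    · push_cast
      linarith

lemma fw_anti (n : ℕ) (hn : 2 ≤ n) : fw (n + 1) ≤ fw n := by
  unfold fw
  have hx : (2 : ℝ) ≤ (n : ℝ) := by exact_mod_cast hn
  set x : ℝ := (n : ℝ) with hxdef
  have hx0 : (0 : ℝ) < x := by linarith
  have hx1 : (0 : ℝ) < x - 1 := by linarith
  have hcast : ((n + 1 : ℕ) : ℝ) = x + 1 := by push_cast; ring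
  rw [hcast]
  have hlog1 : Real.log ((x + 1) / x) ≤ (x + 1) / x - 1 :=
    Real.log_le_sub_one_of_pos (by positivity)
  have hld : Real.log ((x + 1) / x) = Real.log (x + 1) - Real.log x :=
    Real.log_div (by linarith) (by linarith)
  have hfrac : (x + 1) / x - 1 = 1 / x := by field_simp; ring
  have h1 : Real.log (x + 1) - Real.log x ≤ 1 / x := by rw [← hld, ← hfrac]; exact hlog1
  have h2 : (1 : ℝ) ≤ Real.log (x + 1) := by
    have he : Real.exp 1 ≤ x + 1 := by
      have := Real.exp_one_lt_d9
      linarith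
    calc (1 : ℝ) = Real.log (Real.exp 1) := (Real.log_exp 1).symm
    _ ≤ Real.log (x + 1) := Real.log_le_log (Real.exp_pos 1) he
  rw [show x + 1 - 1 = x by ring, div_le_div_iff₀ hx0 hx1]
  have hmul : x * (Real.log (x + 1) - Real.log x) ≤ 1 := by
    have := mul_le_mul_of_nonneg_left h1 (le_of_lt hx0)
    calc x * (Real.log (x + 1) - Real.log x) ≤ x * (1 / x) := this
    _ = 1 := by field_simp
  nlinarith

lemma one_div_le_fw {p : ℕ} (hp : p.Prime) : (1 : ℝ) / p ≤ fw p := by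
  unfold fw
  have hp2 : (2 : ℝ) ≤ (p : ℝ) := by exact_mod_cast hp.two_le
  have hp0 : (0 : ℝ) < (p : ℝ) := by linarith
  have hp1 : (0 : ℝ) < (p : ℝ) - 1 := by linarith
  have hlog : Real.log (1 / (p : ℝ)) ≤ 1 / (p : ℝ) - 1 :=
    Real.log_le_sub_one_of_pos (by positivity)
  have hld : Real.log (1 / (p : ℝ)) = -Real.log p := by
    rw [one_div, Real.log_inv]
  rw [hld] at hlog
  rw [div_le_div_iff₀ hp0 hp1]
  have hinv : (1 / (p : ℝ)) * (p : ℝ) = 1 := by field_simp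
  nlinarith

lemma abel_aux (β : ℝ) (A P S T : ℕ → ℝ)
    (hS : ∀ N, S (N + 1) - S N = (A (N + 1) - A N) * fw (N + 1))
    (hT : ∀ N, T (N + 1) - T N = (P (N + 1) - P N) * fw (N + 1))
    (n0 : ℕ) (hn0 : 2 ≤ n0) (hAP : ∀ n, n0 ≤ n → β * P n ≤ A n) :
    ∀ N, n0 ≤ N →
      S n0 - β * T n0 - (A n0 - β * P n0) * fw (n0 + 1) + β * T N ≤ S N := by
  have key : ∀ N, n0 ≤ N →
      S n0 - β * T n0 - (A n0 - β * P n0) * fw (n0 + 1) ≤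
        S N - β * T N - (A N - β * P N) * fw (N + 1) := by
    intro N hN
    induction N, hN using Nat.le_induction with
    | base => exact le_refl _
    | succ N hN ih =>
      have h1 := hS N
      have h2 := hT N
      have h3 : fw (N + 1 + 1) ≤ fw (N + 1) := fw_anti (N + 1) (by omega)
      have h4 := hAP (N + 1) (by omega)
      have keq : S (N + 1) - β * T (N + 1) - (A (N + 1) - β * P (N + 1)) * fw (N + 1 + 1)
          = (S N - β * T N - (A N - β * P N) * fw (N + 1))
            + (A (N + 1) - β * P (N + 1)) * (fw (N + 1) - fw (N + 1 + 1)) := by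
        linear_combination h1 - β * h2
      rw [keq]
      have hpos := mul_nonneg (sub_nonneg.2 h4) (sub_nonneg.2 h3)
      linarith
  intro N hN
  have h5 := key N hN
  have h4 := hAP N hN
  have h6 := fw_nonneg (N + 1)
  nlinarith [mul_nonneg (sub_nonneg.2 h4) h6]

lemma master (A P S T : ℕ → ℝ)
    (hAP : ∀ N, A N ≤ P N) (hA0 : ∀ N, 0 ≤ A N) (hP0 : ∀ N, 0 ≤ P N)
    (hP2 : ∀ N, 2 ≤ N → 1 ≤ P N)
    (hS : ∀ N, S (N + 1) - S N = (A (N + 1) - A N) * fw (N + 1))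
    (hT : ∀ N, T (N + 1) - T N = (P (N + 1) - P N) * fw (N + 1))
    (hST : ∀ N, S N ≤ T N) (hT0 : ∀ N, 0 ≤ T N)
    (hTtop : Tendsto T atTop atTop) :
    liminf (fun N => A N / P N) atTop ≤ liminf (fun N => S N / T N) atTop := by
  refine le_of_forall_lt fun c hc => ?_
  obtain ⟨β, hcβ, hβ⟩ := exists_between hc
  refine lt_of_lt_of_le hcβ ?_
  have hub : ∀ N, A N / P N ≤ 1 := fun N => div_le_one_of_le₀ (hAP N) (hP0 N)
  have hbdd : IsBoundedUnder (· ≥ ·) atTop (fun N => A N / P N) :=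
    isBoundedUnder_of ⟨0, fun N => div_nonneg (hA0 N) (hP0 N)⟩
  have hev : ∀ᶠ N in atTop, β * P N ≤ A N := by
    filter_upwards [eventually_lt_of_lt_liminf hβ hbdd, eventually_ge_atTop 2] with N h1 h2
    have hP : (0 : ℝ) < P N := lt_of_lt_of_le one_pos (hP2 N h2)
    exact le_of_lt ((lt_div_iff₀ hP).mp h1)
  rw [eventually_atTop] at hev
  obtain ⟨n1, hn1⟩ := hev
  set n0 := max n1 2 with hn0def
  set D := S n0 - β * T n0 - (A n0 - β * P n0) * fw (n0 + 1) with hD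
  have habel : ∀ N, n0 ≤ N → D + β * T N ≤ S N := by
    intro N hN
    have := abel_aux β A P S T hS hT n0 (le_max_right _ _)
      (fun n hn => hn1 n (le_trans (le_max_left _ _) hn)) N hN
    linarith
  have hTpos : ∀ᶠ N in atTop, (0 : ℝ) < T N := hTtop.eventually_gt_atTop 0
  have hineq : ∀ᶠ N in atTop, β + D / T N ≤ S N / T N := by
    filter_upwards [eventually_ge_atTop n0, hTpos] with N h1 h2
    have h3 := habel N h1
    have h4 : (D + β * T N) / T N ≤ S N / T N :=
      div_le_div_of_nonneg_right h3 h2.le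
    have h5 : (D + β * T N) / T N = D / T N + β := by
      field_simp
    linarith
  have htend : Tendsto (fun N => β + D / T N) atTop (𝓝 β) := by
    have h0 : Tendsto (fun N => D / T N) atTop (𝓝 0) :=
      Tendsto.div_atTop tendsto_const_nhds hTtop
    simpa using tendsto_const_nhds.add h0
  have hvle : ∀ N, S N / T N ≤ 1 := fun N => div_le_one_of_le₀ (hST N) (hT0 N)
  calc β = liminf (fun N => β + D / T N) atTop := htend.liminf_eq.symm
  _ ≤ liminf (fun N => S N / T N) atTop :=
      liminf_le_liminf hineq htend.isBoundedUnder_ge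
        ((isBoundedUnder_of ⟨1, hvle⟩).isCoboundedUnder_ge)

end Stmt4Aux

open Stmt4Aux Finset in
/-- For a set `X` of primes, the weighted density
`δ(X) = liminf (1/ψ(N)) Σ_{p ∈ X, p ≤ N} (log p)/(p-1)` is at least the natural density
`d(X) = liminf #{p ∈ X : p ≤ N}/π(N)`. -/
theorem stmt4 (X : Set ℕ) [DecidablePred (· ∈ X)] (hX : ∀ p ∈ X, p.Prime) :
    liminf
        (fun N : ℕ =>
          (((Finset.range (N + 1)).filter fun p => p.Prime ∧ p ∈ X).card : ℝ)
            / (Nat.primeCounting N : ℝ))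
        atTop
      ≤
    liminf
        (fun N : ℕ =>
          (∑ p ∈ (Finset.range (N + 1)).filter (fun p => p.Prime ∧ p ∈ X),
              Real.log p / ((p : ℝ) - 1))
            /
          (∑ p ∈ (Finset.range (N + 1)).filter Nat.Prime,
              Real.log p / ((p : ℝ) - 1)))
        atTop := by
  classical
  have hπ : ∀ N : ℕ, (Nat.primeCounting N : ℝ) =
      (((Finset.range (N + 1)).filter Nat.Prime).card : ℝ) := by
    intro N
    rw [Nat.primeCounting, Nat.primeCounting', Nat.count_eq_card_filter_range]
  simp only [hπ]
  -- increment lemma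
  have incr : ∀ (q : ℕ → Prop) [DecidablePred q] (g : ℕ → ℝ) (N : ℕ),
      (∑ p ∈ (range (N + 2)).filter q, g p) - (∑ p ∈ (range (N + 1)).filter q, g p)
        = ((((range (N + 2)).filter q).card : ℝ) - (((range (N + 1)).filter q).card : ℝ))
            * g (N + 1) := by
    intro q _ g N
    rw [show N + 2 = (N + 1) + 1 from rfl, Finset.range_add_one, Finset.filter_insert]
    by_cases h : q (N + 1)
    · rw [if_pos h]
      have hmem : N + 1 ∉ (range (N + 1)).filter q := by simp
      rw [Finset.sum_insert hmem, Finset.card_insert_of_notMem hmem]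
      push_cast
      ring
    · rw [if_neg h]
      simp
  refine master
    (fun N => (((range (N + 1)).filter fun p => p.Prime ∧ p ∈ X).card : ℝ))
    (fun N => (((range (N + 1)).filter Nat.Prime).card : ℝ))
    (fun N => ∑ p ∈ (range (N + 1)).filter (fun p => p.Prime ∧ p ∈ X), fw p)
    (fun N => ∑ p ∈ (range (N + 1)).filter Nat.Prime, fw p)
    ?_ ?_ ?_ ?_ ?_ ?_ ?_ ?_ ?_
  · intro N
    have : ((range (N + 1)).filter fun p => p.Prime ∧ p ∈ X) ⊆ (range (N + 1)).filter Nat.Prime :=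
      Finset.monotone_filter_right _ (fun p _ hp => hp.1)
    exact_mod_cast Finset.card_le_card this
  · intro N
    positivity
  · intro N; positivity
  · intro N hN
    have h2 : (2 : ℕ) ∈ (range (N + 1)).filter Nat.Prime := by
      simp [Finset.mem_filter, Finset.mem_range, Nat.prime_two]
      omega
    have : 1 ≤ ((range (N + 1)).filter Nat.Prime).card := Finset.card_pos.mpr ⟨2, h2⟩
    exact_mod_cast this
  · intro N; exact incr _ fw N
  · intro N; exact incr _ fw N
  · intro N
    apply Finset.sum_le_sum_of_subset_of_nonneg
      (Finset.monotone_filter_right _ (fun p _ hp => hp.1))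
    intro p _ _
    exact fw_nonneg p
  · intro N
    exact Finset.sum_nonneg fun p _ => fw_nonneg p
  · -- T → atTop
    have h0 : ∀ i : ℕ, 0 ≤ Set.indicator {p | Nat.Prime p} (fun n : ℕ => (1 : ℝ) / n) i :=
      fun i => Set.indicator_nonneg (fun p _ => by positivity) i
    have hdiv := (not_summable_iff_tendsto_nat_atTop_of_nonneg h0).mp
      not_summable_one_div_on_primes
    apply tendsto_atTop_mono ?_ (hdiv.comp (tendsto_add_atTop_nat 1))
    intro N
    show (∑ i ∈ range (N + 1), Set.indicator {p | Nat.Prime p} (fun n : ℕ => (1 : ℝ) / n) i)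
      ≤ ∑ p ∈ (range (N + 1)).filter Nat.Prime, fw p
    rw [Finset.sum_indicator_eq_sum_filter]
    apply le_trans (le_of_eq ?_) (Finset.sum_le_sum fun p hp =>
      one_div_le_fw (Finset.mem_filter.mp hp).2)
    · apply Finset.sum_congr ?_ fun _ _ => rfl
      apply Finset.filter_congr
      intro x _
      simp [Set.mem_setOf_eq]
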